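/- Let n ≥ 1, let Σ ⊂ ℝⁿ⁺¹ be a closed set, and let σ be a Borel measure on ℝⁿ⁺¹ supported in Σ satisfying the upper ADR bound σ(Q_ρ(z,τ) ∩ Σ) ≤ M₀ρⁿ⁺¹ for every (z,τ) ∈ Σ and every 0 < ρ ≤ 4r, where M₀ ≥ 1 and r > 0. Let (x₀,t₀) ∈ Σ. Then there is a constant C₁ depending only on n and M₀ such that for every Borel set E ⊂ Σ ∩ Q_{2r}(x₀,t₀) and every (X,t) ∈ ℝⁿ⁺¹, the single-layer heat potential satisfies 0 ≤ ∫_E Γ(X,t;y,s) dσ(y,s) ≤ C₁·r. -/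

import Mathlib

open MeasureTheory Set Filter Topology

noncomputable section

/-- Points of space-time `ℝⁿ × ℝ`. -/
abbrev Pt (n : ℕ) : Type := EuclideanSpace ℝ (Fin n) × ℝ

/-- The open parabolic cube `Q_r(c)`. -/
def pcube (n : ℕ) (c : Pt n) (r : ℝ) : Set (Pt n) :=
  {p | (∀ i, |p.1 i - c.1 i| < r) ∧ c.2 - r ^ 2 < p.2 ∧ p.2 < c.2 + r ^ 2}

/-- The time-backward half cube `Q_r⁻(c)`. -/
def pcubeMinus (n : ℕ) (c : Pt n) (r : ℝ) : Set (Pt n) :=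
  {p | (∀ i, |p.1 i - c.1 i| < r) ∧ c.2 - r ^ 2 < p.2 ∧ p.2 < c.2}

/-- The time-forward half cube `Q_r⁺(c)`. -/
def pcubePlus (n : ℕ) (c : Pt n) (r : ℝ) : Set (Pt n) :=
  {p | (∀ i, |p.1 i - c.1 i| < r) ∧ c.2 < p.2 ∧ p.2 < c.2 + r ^ 2}

/-- The parabolic norm `‖(X,t)‖ = |X| + |t|^{1/2}`. -/
def pnorm (n : ℕ) (p : Pt n) : ℝ := ‖p.1‖ + Real.sqrt |p.2|

/-- The parabolic distance. -/
def pdist (n : ℕ) (p q : Pt n) : ℝ := pnorm n (p.1 - q.1, p.2 - q.2)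

/-- The parabolic diameter of a set (in `ℝ≥0∞`). -/
def pdiam (n : ℕ) (A : Set (Pt n)) : ENNReal :=
  ⨆ p ∈ A, ⨆ q ∈ A, ENNReal.ofReal (pdist n p q)

/-- The parabolic distance from a point to a set. -/
def pdistTo (n : ℕ) (p : Pt n) (A : Set (Pt n)) : ℝ := sInf ((pdist n p) '' A)

/-- The parabolic boundary `𝒫Ω`. -/
def parabolicBdry (n : ℕ) (Ω : Set (Pt n)) : Set (Pt n) :=
  {p | p ∈ frontier Ω ∧ ∀ r > 0, (pcubeMinus n p r ∩ Ωᶜ).Nonempty}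

/-- The bottom boundary `ℬΩ`. -/
def bottomBdry (n : ℕ) (Ω : Set (Pt n)) : Set (Pt n) :=
  {p | p ∈ parabolicBdry n Ω ∧ ∃ ε > 0, pcubePlus n p ε ⊆ Ω}

/-- The abnormal boundary `∂ₐΩ`. -/
def abnormalBdry (n : ℕ) (Ω : Set (Pt n)) : Set (Pt n) :=
  {p | p ∈ frontier Ω ∧ ∃ ε > 0, pcubeMinus n p ε ⊆ Ω}

/-- The singular boundary `∂ₛΩ`. -/
def singBdry (n : ℕ) (Ω : Set (Pt n)) : Set (Pt n) :=
  {p | p ∈ abnormalBdry n Ω ∧ ∃ ε > 0, pcubePlus n p ε ∩ Ω = ∅}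

/-- The essential boundary `∂ₑΩ = ∂Ω ∖ ∂ₛΩ`. -/
def essBdry (n : ℕ) (Ω : Set (Pt n)) : Set (Pt n) := frontier Ω \ singBdry n Ω

/-- `T_min(Ω)`, as an extended real number. -/
def parTmin (n : ℕ) (Ω : Set (Pt n)) : EReal := ⨅ p ∈ Ω, (p.2 : EReal)

/-- `T_max(Ω)`, as an extended real number. -/
def parTmax (n : ℕ) (Ω : Set (Pt n)) : EReal := ⨆ p ∈ Ω, (p.2 : EReal)

/-- The quasi-lateral boundary `Σ`:  `∂Ω` with the time slice of `ℬΩ` at `t = T_min(Ω)`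
removed (when `T_min(Ω) > -∞`), and the time slice of `∂ₛΩ` at `t = T_max(Ω)` removed
(when `T_max(Ω) < ∞`).  Since no real time coordinate can equal `±∞`, the `EReal`
formulation below encodes exactly this. -/
def quasiLateral (n : ℕ) (Ω : Set (Pt n)) : Set (Pt n) :=
  frontier Ω \
    ({p | p ∈ bottomBdry n Ω ∧ (p.2 : EReal) = parTmin n Ω} ∪
     {p | p ∈ singBdry n Ω ∧ (p.2 : EReal) = parTmax n Ω})

/-- The free-space heat kernel. -/
def heatKernel (n : ℕ) (X : EuclideanSpace ℝ (Fin n)) (t : ℝ)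
    (y : EuclideanSpace ℝ (Fin n)) (s : ℝ) : ℝ :=
  if s < t then
    (4 * Real.pi * (t - s)) ^ (-(n : ℝ) / 2) * Real.exp (-‖X - y‖ ^ 2 / (4 * (t - s)))
  else 0

/-- Time derivative `∂ₜ u`. -/
def timeDeriv (n : ℕ) (u : Pt n → ℝ) (p : Pt n) : ℝ := deriv (fun τ => u (p.1, τ)) p.2

/-- Spatial Laplacian `Δ_X u`. -/
def spaceLaplacian (n : ℕ) (u : Pt n → ℝ) (p : Pt n) : ℝ :=
  ∑ i : Fin n,
    iteratedDeriv 2 (fun h : ℝ => u (p.1 + h • EuclideanSpace.single i (1 : ℝ), p.2)) 0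

/-- A classical supersolution of the heat equation on `U`: continuous on `U`,
twice continuously differentiable in `X` and once in `t`, with `∂ₜ u - Δ_X u ≥ 0`. -/
structure IsSupersolutionOn (n : ℕ) (u : Pt n → ℝ) (U : Set (Pt n)) : Prop where
  cont : ContinuousOn u U
  smoothX : ∀ p ∈ U, ContDiffAt ℝ 2 (fun X => u (X, p.2)) p.1
  smoothT : ∀ p ∈ U, ContDiffAt ℝ 1 (fun τ => u (p.1, τ)) p.2
  ineq : ∀ p ∈ U, spaceLaplacian n u p ≤ timeDeriv n u p

/-- A classical subsolution of the heat equation on `U`. -/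
structure IsSubsolutionOn (n : ℕ) (u : Pt n → ℝ) (U : Set (Pt n)) : Prop where
  cont : ContinuousOn u U
  smoothX : ∀ p ∈ U, ContDiffAt ℝ 2 (fun X => u (X, p.2)) p.1
  smoothT : ∀ p ∈ U, ContDiffAt ℝ 1 (fun τ => u (p.1, τ)) p.2
  ineq : ∀ p ∈ U, timeDeriv n u p ≤ spaceLaplacian n u p

/-- A caloric function (classical solution of the heat equation) on `U`. -/
structure IsCaloricOn (n : ℕ) (u : Pt n → ℝ) (U : Set (Pt n)) : Prop where
  cont : ContinuousOn u U
  smoothX : ∀ p ∈ U, ContDiffAt ℝ 2 (fun X => u (X, p.2)) p.1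
  smoothT : ∀ p ∈ U, ContDiffAt ℝ 1 (fun τ => u (p.1, τ)) p.2
  eq : ∀ p ∈ U, timeDeriv n u p = spaceLaplacian n u p
lemma aux_coord_le (n : ℕ) (v : EuclideanSpace ℝ (Fin n)) (i : Fin n) : |v i| ≤ ‖v‖ := by
  have h1 : v i ^ 2 ≤ ∑ j, v j ^ 2 :=
    Finset.single_le_sum (f := fun j => v j ^ 2) (fun j _ => sq_nonneg _) (Finset.mem_univ i)
  calc |v i| = Real.sqrt (v i ^ 2) := (Real.sqrt_sq_eq_abs _).symm
    _ ≤ Real.sqrt (∑ j, v j ^ 2) := Real.sqrt_le_sqrt h1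
    _ = ‖v‖ := by rw [EuclideanSpace.norm_eq]; simp [Real.norm_eq_abs, sq_abs]


lemma pdist_nonneg (n : ℕ) (p q : Pt n) : 0 ≤ pdist n p q :=
  add_nonneg (norm_nonneg _) (Real.sqrt_nonneg _)

lemma pdist_fst_le (n : ℕ) (p q : Pt n) : ‖p.1 - q.1‖ ≤ pdist n p q :=
  le_add_of_nonneg_right (Real.sqrt_nonneg _)

lemma pdist_snd_le (n : ℕ) (p q : Pt n) : Real.sqrt |p.2 - q.2| ≤ pdist n p q :=
  le_add_of_nonneg_left (norm_nonneg _)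

lemma pdist_snd_sq_le (n : ℕ) {p q : Pt n} {c : ℝ} (h : pdist n p q ≤ c) :
    |p.2 - q.2| ≤ c ^ 2 := by
  have h1 := (pdist_snd_le n p q).trans h
  have := pow_le_pow_left₀ (Real.sqrt_nonneg _) h1 2
  rwa [Real.sq_sqrt (abs_nonneg _)] at this

lemma pdist_eq_zero (n : ℕ) {p q : Pt n} (h : pdist n p q = 0) : q = p := by
  unfold pdist pnorm at h
  have h1 : ‖p.1 - q.1‖ = 0 ∧ Real.sqrt |p.2 - q.2| = 0 :=
    (add_eq_zero_iff_of_nonneg (norm_nonneg _) (Real.sqrt_nonneg _)).mp h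
  have h2 : p.1 = q.1 := sub_eq_zero.mp (norm_eq_zero.mp h1.1)
  have h3 : p.2 = q.2 := by
    have := Real.sqrt_eq_zero (abs_nonneg _) |>.mp h1.2
    have := abs_eq_zero.mp this
    linarith [sub_eq_zero.mp this]
  exact Prod.ext h2.symm h3.symm

lemma aux_core (n : ℕ) {a b : ℝ} (ha : 0 ≤ a) (hb : 0 < b) :
    Real.exp (-a ^ 2 / (4 * b ^ 2)) * (a + b) ^ n ≤ (8 ^ n * n.factorial) * b ^ n := by
  have hfac : (1:ℝ) ≤ n.factorial := by exact_mod_cast n.factorial_pos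
  rcases le_total a b with h | h
  · have h1 : Real.exp (-a ^ 2 / (4 * b ^ 2)) ≤ 1 := by
      apply Real.exp_le_one_iff.mpr
      have h0 : 0 ≤ a ^ 2 / (4 * b ^ 2) := by positivity
      rw [neg_div]
      linarith
    calc Real.exp (-a ^ 2 / (4 * b ^ 2)) * (a + b) ^ n ≤ 1 * (2 * b) ^ n := by
          apply mul_le_mul h1 (pow_le_pow_left₀ (by linarith) (by linarith) n)
            (by positivity) (by norm_num)
      _ = 2 ^ n * b ^ n := by rw [one_mul, mul_pow]
      _ ≤ (8 ^ n * n.factorial) * b ^ n := by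
          apply mul_le_mul_of_nonneg_right _ (by positivity)
          calc (2:ℝ) ^ n ≤ 8 ^ n := pow_le_pow_left₀ (by norm_num) (by norm_num) n
            _ = 8 ^ n * 1 := (mul_one _).symm
            _ ≤ 8 ^ n * n.factorial := by
                apply mul_le_mul_of_nonneg_left hfac (by positivity)
  · have ha' : 0 < a := lt_of_lt_of_le hb h
    set x : ℝ := a ^ 2 / (4 * b ^ 2) with hx
    have hxpos : 0 < x := by positivity
    have hexp : Real.exp (-a ^ 2 / (4 * b ^ 2)) ≤ n.factorial * (4 * b ^ 2) ^ n / (a ^ 2) ^ n := by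
      rw [show -a ^ 2 / (4 * b ^ 2) = -x by rw [hx]; ring, Real.exp_neg]
      have h2 : x ^ n / n.factorial ≤ Real.exp x := Real.pow_div_factorial_le_exp x hxpos.le n
      have h3 : 0 < x ^ n / n.factorial := by positivity
      have h4 : (Real.exp x)⁻¹ ≤ (x ^ n / n.factorial)⁻¹ := by
        apply inv_anti₀ h3 h2
      refine h4.trans (le_of_eq ?_)
      rw [hx, div_pow]
      field_simp
    calc Real.exp (-a ^ 2 / (4 * b ^ 2)) * (a + b) ^ n
        ≤ (n.factorial * (4 * b ^ 2) ^ n / (a ^ 2) ^ n) * (2 * a) ^ n := by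
          apply mul_le_mul hexp (pow_le_pow_left₀ (by linarith) (by linarith) n)
            (by positivity) (by positivity)
      _ = (8 ^ n * n.factorial) * b ^ n * ((b ^ n) / (a ^ n)) := by
          field_simp
          rw [show (8:ℝ) ^ n = 2 ^ n * 4 ^ n by rw [← mul_pow]; norm_num]
          ring
      _ ≤ (8 ^ n * n.factorial) * b ^ n * 1 := by
          apply mul_le_mul_of_nonneg_left _ (by positivity)
          rw [div_le_one (by positivity)]
          exact pow_le_pow_left₀ hb.le h n
      _ = (8 ^ n * n.factorial) * b ^ n := mul_one _

lemma aux_kernel_le (n : ℕ) (p q : Pt n) :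
    heatKernel n p.1 p.2 q.1 q.2 ≤ (8 ^ n * n.factorial) / (pdist n p q) ^ n := by
  unfold heatKernel
  split_ifs with hlt
  · set τ : ℝ := p.2 - q.2 with hτdef
    have hτ : 0 < τ := sub_pos.mpr hlt
    set a : ℝ := ‖p.1 - q.1‖ with hadef
    set b : ℝ := Real.sqrt τ with hbdef
    have ha : 0 ≤ a := norm_nonneg _
    have hb : 0 < b := Real.sqrt_pos.mpr hτ
    have hb2 : b ^ 2 = τ := Real.sq_sqrt hτ.le
    have hd : pdist n p q = a + b := by
      unfold pdist pnorm
      simp only [hadef, hbdef]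
      congr 2
      exact abs_of_pos hτ
    have hpre : (4 * Real.pi * τ) ^ (-(n : ℝ) / 2) ≤ (b ^ n)⁻¹ := by
      have h4π : (1:ℝ) ≤ 4 * Real.pi := by nlinarith [Real.pi_gt_three]
      have h1 : (4 * Real.pi * τ) ^ (-(n : ℝ) / 2)
          = (4 * Real.pi) ^ (-(n : ℝ) / 2) * τ ^ (-(n : ℝ) / 2) := by
        rw [Real.mul_rpow (by positivity) hτ.le]
      have h2 : (4 * Real.pi) ^ (-(n : ℝ) / 2) ≤ 1 :=
        Real.rpow_le_one_of_one_le_of_nonpos h4π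
          (by rw [neg_div]; exact neg_nonpos.mpr (by positivity))
      have h3 : τ ^ (-(n : ℝ) / 2) = (b ^ n)⁻¹ := by
        rw [← hb2, ← Real.rpow_natCast b 2, ← Real.rpow_natCast b n,
          ← Real.rpow_mul hb.le, ← Real.rpow_neg hb.le]
        congr 1
        push_cast
        ring
      calc (4 * Real.pi * τ) ^ (-(n : ℝ) / 2)
          = (4 * Real.pi) ^ (-(n : ℝ) / 2) * τ ^ (-(n : ℝ) / 2) := h1
        _ ≤ 1 * τ ^ (-(n : ℝ) / 2) :=
            mul_le_mul_of_nonneg_right h2 (Real.rpow_nonneg hτ.le _)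
        _ = (b ^ n)⁻¹ := by rw [one_mul, h3]
    have hcore := aux_core n ha hb
    have hexparg : -‖p.1 - q.1‖ ^ 2 / (4 * (p.2 - q.2)) = -a ^ 2 / (4 * b ^ 2) := by
      rw [hb2]
    rw [hexparg, hd]
    have habpos : 0 < (a + b) ^ n := pow_pos (by linarith) n
    calc (4 * Real.pi * τ) ^ (-(n : ℝ) / 2) * Real.exp (-a ^ 2 / (4 * b ^ 2))
        ≤ (b ^ n)⁻¹ * Real.exp (-a ^ 2 / (4 * b ^ 2)) :=
          mul_le_mul_of_nonneg_right hpre (Real.exp_nonneg _)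
      _ ≤ (8 ^ n * n.factorial) / (a + b) ^ n := by
          rw [inv_mul_le_iff₀ (by positivity)]
          rw [← le_div_iff₀ habpos] at hcore
          calc Real.exp (-a ^ 2 / (4 * b ^ 2)) ≤ 8 ^ n * ↑n.factorial * b ^ n / (a + b) ^ n := hcore
            _ = b ^ n * ((8 ^ n * ↑n.factorial) / (a + b) ^ n) := by ring
  · exact div_nonneg (by positivity) (pow_nonneg (pdist_nonneg n p q) n)

lemma aux_alg (n : ℕ) (Cn M₀ s : ℝ) (hs : s ≠ 0) :
    Cn / (s/2) ^ n * (M₀ * (3*s) ^ (n+1)) = Cn * 2 ^ n * 3 ^ (n+1) * M₀ * s := by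
  rw [div_pow, mul_pow, pow_succ s]
  field_simp


/-- property (2) of Claim A.3: the single layer heat potential of a surface
cube is bounded by `C₁ r`, assuming upper ADR. -/
theorem statement_11 (n : ℕ) (hn : 1 ≤ n) (M₀ : ℝ) (hM₀ : 1 ≤ M₀) :
    ∃ C₁ : ℝ, 0 < C₁ ∧
      ∀ (S : Set (Pt n)) (σ : Measure (Pt n)) (r : ℝ) (x₀ : Pt n), 0 < r →
        IsClosed S → σ Sᶜ = 0 → x₀ ∈ S →
        (∀ z ∈ S, ∀ ρ : ℝ, 0 < ρ → ρ ≤ 4 * r →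
          σ (pcube n z ρ ∩ S) ≤ ENNReal.ofReal (M₀ * ρ ^ (n + 1))) →
        ∀ E : Set (Pt n), MeasurableSet E → E ⊆ S ∩ pcube n x₀ (2 * r) →
          ∀ p : Pt n,
            ∫⁻ q in E, ENNReal.ofReal (heatKernel n p.1 p.2 q.1 q.2) ∂σ ≤
              ENNReal.ofReal (C₁ * r) := by
  classical
  have hfac : (0:ℝ) < n.factorial := by exact_mod_cast n.factorial_pos
  have hM : (0:ℝ) < M₀ := lt_of_lt_of_le one_pos hM₀
  set Cn : ℝ := 8 ^ n * n.factorial with hCndef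
  have hCn : 0 < Cn := mul_pos (pow_pos (by norm_num) n) hfac
  set K : ℝ := Cn * 2 ^ (2 * n + 1) * 3 ^ (n + 1) * M₀ with hKdef
  have hK : 0 < K :=
    mul_pos (mul_pos (mul_pos hCn (pow_pos (by norm_num) _)) (pow_pos (by norm_num) _)) hM
  refine ⟨2 * K, by linarith, ?_⟩
  intro S σ r x₀ hr hS hσS hx₀ hADR E hE hEsub p
  have hrne : r ≠ 0 := ne_of_gt hr
  set d : Pt n → ℝ := fun q => pdist n p q with hd
  set g : Pt n → ENNReal := fun q => ENNReal.ofReal (heatKernel n p.1 p.2 q.1 q.2) with hg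
  set A : ℕ → Set (Pt n) := fun k =>
    Nat.casesOn k {q | q ∈ E ∧ (r / 2 < d q ∨ q = p)}
      (fun j => {q | q ∈ E ∧ r / 2 ^ (j + 2) < d q ∧ d q ≤ r / 2 ^ (j + 1)}) with hA
  -- covering
  have hcov : E ⊆ ⋃ k, A k := by
    intro q hq
    by_cases hqp : q = p
    · exact mem_iUnion.mpr ⟨0, ⟨hq, Or.inr hqp⟩⟩
    by_cases h0 : r / 2 < d q
    · exact mem_iUnion.mpr ⟨0, ⟨hq, Or.inl h0⟩⟩
    have hdpos : 0 < d q := by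
      rcases lt_or_eq_of_le (pdist_nonneg n p q) with h | h
      · exact h
      · exact absurd (pdist_eq_zero n h.symm) hqp
    have hex : ∃ m, r / 2 ^ (m + 1) < d q := by
      obtain ⟨m, hm⟩ := exists_pow_lt_of_lt_one (div_pos hdpos hr) (by norm_num : (1:ℝ)/2 < 1)
      rw [div_pow, one_pow, div_lt_div_iff₀ (by positivity) hr] at hm
      refine ⟨m, ?_⟩
      have h1 : (2:ℝ) ^ m < 2 ^ (m + 1) := by
        apply pow_lt_pow_right₀ (by norm_num) (by omega)
      rw [div_lt_iff₀ (by positivity)]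
      nlinarith [hdpos]
    have hspec : r / 2 ^ (Nat.find hex + 1) < d q := Nat.find_spec hex
    cases hkd : Nat.find hex with
    | zero =>
        rw [hkd] at hspec
        norm_num at hspec
        exact absurd hspec h0
    | succ j =>
        have hmin : ¬ (r / 2 ^ (j + 1) < d q) := Nat.find_min hex (by omega)
        rw [hkd] at hspec
        exact mem_iUnion.mpr ⟨j + 1, ⟨hq, hspec, not_lt.mp hmin⟩⟩
  -- conversion helper
  have hconv : ∀ (c : ℝ) (k : ℕ), 0 ≤ c →
      ENNReal.ofReal (c * (1/2) ^ k) = ENNReal.ofReal c * 2⁻¹ ^ k := by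
    intro c k hc
    rw [ENNReal.ofReal_mul hc, ENNReal.ofReal_pow (by norm_num)]
    congr 2
    rw [one_div, ENNReal.ofReal_inv_of_pos (by norm_num)]
    norm_num
  -- per-piece estimate
  have hterm : ∀ k, ∫⁻ q in A k, g q ∂σ ≤ ENNReal.ofReal (K * r) * 2⁻¹ ^ k := by
    intro k
    cases k with
    | zero =>
        have hB : (0:ℝ) ≤ Cn / (r/2) ^ n := div_nonneg hCn.le (pow_nonneg (by linarith) n)
        have hgb : ∀ q ∈ A 0, g q ≤ ENNReal.ofReal (Cn / (r/2) ^ n) := by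
          intro q hq
          have hq' : q ∈ E ∧ (r / 2 < d q ∨ q = p) := hq
          rcases hq'.2 with h | h
          · apply ENNReal.ofReal_le_ofReal
            refine (aux_kernel_le n p q).trans ?_
            exact div_le_div_of_nonneg_left hCn.le (pow_pos (by linarith) n)
              (pow_le_pow_left₀ (by linarith) h.le n)
          · subst h
            simp only [hg, heatKernel, lt_irrefl, if_neg (lt_irrefl _)]
            simp
        calc ∫⁻ q in A 0, g q ∂σ
            ≤ ∫⁻ _ in A 0, ENNReal.ofReal (Cn / (r/2) ^ n) ∂σ :=
              setLIntegral_mono measurable_const hgb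
          _ = ENNReal.ofReal (Cn / (r/2) ^ n) * σ (A 0) := setLIntegral_const _ _
          _ ≤ ENNReal.ofReal (Cn / (r/2) ^ n) * ENNReal.ofReal (M₀ * (2*r) ^ (n+1)) := by
              refine mul_le_mul_of_nonneg_left ?_ (by positivity)
              calc σ (A 0) ≤ σ (pcube n x₀ (2*r) ∩ S) := by
                    apply measure_mono
                    intro q hq
                    have hq' : q ∈ E ∧ (r / 2 < d q ∨ q = p) := hq
                    exact ⟨(hEsub hq'.1).2, (hEsub hq'.1).1⟩
                _ ≤ _ := hADR x₀ hx₀ (2*r) (by linarith) (by linarith)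
          _ = ENNReal.ofReal (Cn / (r/2) ^ n * (M₀ * (2*r) ^ (n+1))) :=
              (ENNReal.ofReal_mul hB).symm
          _ ≤ ENNReal.ofReal (K * r) * 2⁻¹ ^ 0 := by
              rw [pow_zero, mul_one]
              apply ENNReal.ofReal_le_ofReal
              have h2n : (2:ℝ) ^ (2*n+1) = 2 ^ n * 2 ^ (n+1) := by
                rw [← pow_add]; congr 1; omega
              have hkey : Cn / (r/2) ^ n * (M₀ * (2*r) ^ (n+1)) = Cn * 2 ^ (2*n+1) * M₀ * r := by
                rw [h2n, div_pow]
                field_simp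
                ring
              rw [hkey, hKdef,
                show Cn * 2 ^ (2*n+1) * 3 ^ (n+1) * M₀ * r
                  = (Cn * 2 ^ (2*n+1) * M₀ * r) * 3 ^ (n+1) by ring]
              apply le_mul_of_one_le_right
              · exact mul_nonneg (mul_nonneg (mul_nonneg hCn.le
                  (pow_nonneg (by norm_num) _)) hM.le) hr.le
              · exact one_le_pow₀ (by norm_num)
    | succ k =>
        set s : ℝ := r / 2 ^ (k+1) with hs
        have hspos : 0 < s := div_pos hr (by positivity)
        have hs2 : r / 2 ^ (k+2) = s / 2 := by
          rw [hs, pow_succ, div_div]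
        rcases Set.eq_empty_or_nonempty (A (k+1)) with hemp | ⟨z, hz⟩
        · rw [hemp, setLIntegral_empty]
          exact zero_le
        · have hz' : z ∈ E ∧ r / 2 ^ (k+2) < d z ∧ d z ≤ r / 2 ^ (k+1) := hz
          have hzS : z ∈ S := (hEsub hz'.1).1
          have hsub : A (k+1) ⊆ pcube n z (3*s) ∩ S := by
            intro q hq
            have hq' : q ∈ E ∧ r / 2 ^ (k+2) < d q ∧ d q ≤ r / 2 ^ (k+1) := hq
            have hq1 : ‖p.1 - q.1‖ ≤ s := (pdist_fst_le n p q).trans hq'.2.2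
            have hq2 : |p.2 - q.2| ≤ s ^ 2 := pdist_snd_sq_le n hq'.2.2
            have hz1 : ‖p.1 - z.1‖ ≤ s := (pdist_fst_le n p z).trans hz'.2.2
            have hz2 : |p.2 - z.2| ≤ s ^ 2 := pdist_snd_sq_le n hz'.2.2
            have htime : |q.2 - z.2| ≤ 2 * s ^ 2 := by
              calc |q.2 - z.2| ≤ |q.2 - p.2| + |p.2 - z.2| := abs_sub_le _ _ _
                _ = |p.2 - q.2| + |p.2 - z.2| := by rw [abs_sub_comm]
                _ ≤ 2 * s ^ 2 := by linarith
            have htime' : |q.2 - z.2| < (3*s) ^ 2 := lt_of_le_of_lt htime (by nlinarith)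
            obtain ⟨ht1, ht2⟩ := abs_lt.mp htime'
            refine ⟨⟨fun i => ?_, by linarith, by linarith⟩, (hEsub hq'.1).1⟩
            have h1 : |q.1 i - z.1 i| ≤ ‖q.1 - z.1‖ := by
              have := aux_coord_le n (q.1 - z.1) i
              simpa using this
            have h2 : ‖q.1 - z.1‖ ≤ ‖p.1 - q.1‖ + ‖p.1 - z.1‖ := by
              have h3 := dist_triangle q.1 p.1 z.1
              rw [dist_eq_norm, dist_eq_norm, dist_eq_norm] at h3
              rw [norm_sub_rev q.1 p.1] at h3
              exact h3
            linarith
          have h3s4r : 3 * s ≤ 4 * r := by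
            have h2k : (2:ℝ) ≤ 2 ^ (k+1) := by
              calc (2:ℝ) = 2 ^ 1 := (pow_one 2).symm
                _ ≤ 2 ^ (k+1) := pow_le_pow_right₀ (by norm_num) (by omega)
            have hsr : s ≤ r / 2 := by
              rw [hs]
              exact div_le_div_of_nonneg_left hr.le (by norm_num) h2k
            linarith
          have hB : (0:ℝ) ≤ Cn / (s/2) ^ n := div_nonneg hCn.le (pow_nonneg (by linarith) n)
          have hgb : ∀ q ∈ A (k+1), g q ≤ ENNReal.ofReal (Cn / (s/2) ^ n) := by
            intro q hq
            have hq' : q ∈ E ∧ r / 2 ^ (k+2) < d q ∧ d q ≤ r / 2 ^ (k+1) := hq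
            apply ENNReal.ofReal_le_ofReal
            refine (aux_kernel_le n p q).trans ?_
            have hdq : s / 2 < d q := hs2 ▸ hq'.2.1
            exact div_le_div_of_nonneg_left hCn.le (pow_pos (by linarith) n)
              (pow_le_pow_left₀ (by linarith) hdq.le n)
          calc ∫⁻ q in A (k+1), g q ∂σ
              ≤ ∫⁻ _ in A (k+1), ENNReal.ofReal (Cn / (s/2) ^ n) ∂σ :=
                setLIntegral_mono measurable_const hgb
            _ = ENNReal.ofReal (Cn / (s/2) ^ n) * σ (A (k+1)) := setLIntegral_const _ _
            _ ≤ ENNReal.ofReal (Cn / (s/2) ^ n) * ENNReal.ofReal (M₀ * (3*s) ^ (n+1)) := by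
                refine mul_le_mul_of_nonneg_left ?_ (by positivity)
                calc σ (A (k+1)) ≤ σ (pcube n z (3*s) ∩ S) := measure_mono hsub
                  _ ≤ _ := hADR z hzS (3*s) (by linarith) h3s4r
            _ = ENNReal.ofReal (Cn / (s/2) ^ n * (M₀ * (3*s) ^ (n+1))) :=
                (ENNReal.ofReal_mul hB).symm
            _ ≤ ENNReal.ofReal (K * r) * 2⁻¹ ^ (k+1) := by
                rw [← hconv (K * r) (k+1) (by positivity)]
                apply ENNReal.ofReal_le_ofReal
                have hrs : K * r * (1/2) ^ (k+1) = K * s := by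
                  rw [hs, div_pow, one_pow]
                  ring
                rw [hrs]
                have hkey : Cn / (s/2) ^ n * (M₀ * (3*s) ^ (n+1))
                    = Cn * 2 ^ n * 3 ^ (n+1) * M₀ * s := aux_alg n Cn M₀ s hspos.ne'
                rw [hkey, hKdef,
                  show Cn * 2 ^ (2*n+1) * 3 ^ (n+1) * M₀ * s
                    = Cn * 2 ^ (2*n+1) * 3 ^ (n+1) * M₀ * s from rfl]
                have h2le : (2:ℝ) ^ n ≤ 2 ^ (2*n+1) := pow_le_pow_right₀ (by norm_num) (by omega)
                have hnn : (0:ℝ) ≤ 3 ^ (n+1) * M₀ * s := by positivity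
                calc Cn * 2 ^ n * 3 ^ (n+1) * M₀ * s
                    = (2:ℝ) ^ n * (Cn * 3 ^ (n+1) * M₀ * s) := by ring
                  _ ≤ (2:ℝ) ^ (2*n+1) * (Cn * 3 ^ (n+1) * M₀ * s) := by
                      apply mul_le_mul_of_nonneg_right h2le
                      positivity
                  _ = Cn * 2 ^ (2*n+1) * 3 ^ (n+1) * M₀ * s := by ring
  -- assembling
  have hKr : (0:ℝ) ≤ K * r := by positivity
  calc ∫⁻ q in E, g q ∂σ
      ≤ ∫⁻ q in ⋃ k, A k, g q ∂σ := lintegral_mono_set hcov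
    _ ≤ ∑' k, ∫⁻ q in A k, g q ∂σ := lintegral_iUnion_le _ _
    _ ≤ ∑' k, ENNReal.ofReal (K * r) * 2⁻¹ ^ k := ENNReal.tsum_le_tsum hterm
    _ = ENNReal.ofReal (K * r) * ∑' k : ℕ, (2⁻¹ : ENNReal) ^ k := ENNReal.tsum_mul_left
    _ = ENNReal.ofReal (K * r) * 2 := by
        rw [ENNReal.tsum_geometric, ENNReal.one_sub_inv_two, inv_inv]
    _ = ENNReal.ofReal (2 * K * r) := by
        rw [show (2:ENNReal) = ENNReal.ofReal 2 from by norm_num,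
          ← ENNReal.ofReal_mul hKr]
        congr 1
        ring
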